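/- Let ζ = e^{2πi/5}, Z₀ = [[ζ, ζ+ζ³],[ζ², ζ²+ζ]]⁻¹ · [[ζ², ζ⁴],[ζ⁴, ζ³]] ∈ 𝔥₂, and β = [[0,0,1,−1],[0,0,−1,0],[0,1,0,0],[1,1,0,0]]. Then β ∈ Sp₄(ℤ), and writing β = [[A,B],[C,D]] in 2×2 blocks, one has −conj(Z₀) = (A·Z₀ + B)(C·Z₀ + D)⁻¹, where conj denotes entrywise complex conjugation. -/
import Mathlib


open Matrix Complex

noncomputable section

/-- `e z = exp(2πiz)` -/
def e (z : ℂ) : ℂ := Complex.exp (2 * Real.pi * Complex.I * z)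

/-- The Siegel upper half-space: symmetric complex matrices with positive definite
imaginary part. -/
def SiegelHalfSpace (g : ℕ) : Set (Matrix (Fin g) (Fin g) ℂ) :=
  {Z | Z.IsSymm ∧ (Matrix.of fun i j => (Z i j).im).PosDef}

/-- The theta function `Θ(u, Z; r, s)`. -/
def Theta {g : ℕ} (u : Fin g → ℂ) (Z : Matrix (Fin g) (Fin g) ℂ)
    (r s : Fin g → ℝ) : ℂ :=
  ∑' x : Fin g → ℤ,
    e ((fun i => (x i : ℂ) + (r i : ℂ)) ⬝ᵥ Z.mulVec (fun i => (x i : ℂ) + (r i : ℂ)) / 2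
      + (fun i => (x i : ℂ) + (r i : ℂ)) ⬝ᵥ (u + fun i => (s i : ℂ)))

/-- The theta constant `Φ_{[r;s]}(Z)`. -/
def PhiTheta {g : ℕ} (r s : Fin g → ℝ) (Z : Matrix (Fin g) (Fin g) ℂ) : ℂ :=
  Theta 0 Z r s / Theta 0 Z 0 0

/-- The standard symplectic matrix `J`. -/
def Jmat (g : ℕ) : Matrix (Fin g ⊕ Fin g) (Fin g ⊕ Fin g) ℤ :=
  Matrix.fromBlocks 0 (-1) 1 0

/-- Membership in `Sp_{2g}(ℤ)`. -/
def IsSymplectic {g : ℕ} (γ : Matrix (Fin g ⊕ Fin g) (Fin g ⊕ Fin g) ℤ) : Prop :=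
  γᵀ * Jmat g * γ = Jmat g

/-- `ζ = e^{2πi/5}`. -/
def zeta5 : ℂ := Complex.exp (2 * Real.pi * Complex.I / 5)

lemma prim5 : IsPrimitiveRoot zeta5 5 := by
  have := Complex.isPrimitiveRoot_exp 5 (by norm_num)
  simpa [zeta5] using this

lemma zeta5_pow5 : zeta5 ^ 5 = 1 := prim5.pow_eq_one

lemma zeta5_cyc : zeta5 ^ 4 + zeta5 ^ 3 + zeta5 ^ 2 + zeta5 + 1 = 0 := by
  have h1 : zeta5 ≠ 1 := prim5.ne_one (by norm_num)
  have h : (zeta5 - 1) * (zeta5 ^ 4 + zeta5 ^ 3 + zeta5 ^ 2 + zeta5 + 1) = 0 := by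
    linear_combination zeta5_pow5
  exact (mul_eq_zero.mp h).resolve_left (sub_ne_zero.mpr h1)

lemma zeta5_ne_zero : zeta5 ≠ 0 := Complex.exp_ne_zero _

lemma zeta5_conj : (starRingEnd ℂ) zeta5 = zeta5 ^ 4 := by
  have hc : (starRingEnd ℂ) (2 * (Real.pi : ℂ) * Complex.I / 5)
      = -(2 * (Real.pi : ℂ) * Complex.I / 5) := by
    simp [map_div₀, Complex.conj_I, map_ofNat]
    ring
  have h1 : zeta5 * (starRingEnd ℂ) zeta5 = 1 := by
    rw [zeta5, ← Complex.exp_conj, hc, ← Complex.exp_add]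
    simp
  apply mul_left_cancel₀ zeta5_ne_zero
  rw [h1]
  linear_combination -zeta5_pow5


/-- The CM point `Z₀` attached to `ℚ(ζ₅)`. -/
def Zcm : Matrix (Fin 2) (Fin 2) ℂ :=
  (!![zeta5, zeta5 + zeta5 ^ 3; zeta5 ^ 2, zeta5 ^ 2 + zeta5])⁻¹ *
    !![zeta5 ^ 2, zeta5 ^ 4; zeta5 ^ 4, zeta5 ^ 3]

/-- Cast an integer matrix to a complex matrix. -/
def czM {g : ℕ} (M : Matrix (Fin g) (Fin g) ℤ) : Matrix (Fin g) (Fin g) ℂ :=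
  M.map (Int.cast : ℤ → ℂ)

lemma hMdet : IsUnit (!![zeta5, zeta5 + zeta5 ^ 3; zeta5 ^ 2, zeta5 ^ 2 + zeta5]).det := by
  rw [isUnit_iff_ne_zero, Matrix.det_fin_two_of]
  have h3 : zeta5 ^ 3 ≠ 1 := prim5.pow_ne_one_of_pos_of_lt (by norm_num) (by norm_num)
  have : zeta5 ^ 2 * (1 - zeta5 ^ 3) ≠ 0 :=
    mul_ne_zero (pow_ne_zero _ zeta5_ne_zero) (sub_ne_zero.mpr (Ne.symm h3))
  intro h
  exact this (by linear_combination h)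

lemma hZ : Zcm = !![zeta5 ^ 2 - zeta5 ^ 3, -1 - zeta5 ^ 2;
    -1 - zeta5 ^ 2, 1 + zeta5 + zeta5 ^ 2 + zeta5 ^ 3] := by
  have hMN : !![zeta5, zeta5 + zeta5 ^ 3; zeta5 ^ 2, zeta5 ^ 2 + zeta5] *
      !![zeta5 ^ 2 - zeta5 ^ 3, -1 - zeta5 ^ 2;
        -1 - zeta5 ^ 2, 1 + zeta5 + zeta5 ^ 2 + zeta5 ^ 3] =
      !![zeta5 ^ 2, zeta5 ^ 4; zeta5 ^ 4, zeta5 ^ 3] := by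
    ext i j
    fin_cases i <;> fin_cases j <;>
      simp [Matrix.mul_apply, Fin.sum_univ_two]
    · linear_combination (-zeta5) * zeta5_cyc
    · linear_combination (zeta5 ^ 2) * zeta5_cyc
    · linear_combination (-zeta5) * zeta5_cyc
    · linear_combination zeta5 * zeta5_cyc
  rw [Zcm, ← hMN, Matrix.nonsing_inv_mul_cancel_left _ _ hMdet]

lemma hZconj : Zcm.map (starRingEnd ℂ) = !![zeta5 ^ 3 - zeta5 ^ 2, -1 - zeta5 ^ 3;
    -1 - zeta5 ^ 3, 1 + zeta5 ^ 4 + zeta5 ^ 3 + zeta5 ^ 2] := by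
  rw [hZ]
  ext i j
  fin_cases i <;> fin_cases j <;>
    simp [Matrix.map_apply, map_sub, map_add, map_pow, _root_.map_one, zeta5_conj]
  · linear_combination (zeta5^2 - 2*zeta5^3 + zeta5^4 + zeta5^7 - zeta5^8) * zeta5_cyc
  · linear_combination (zeta5^4 - zeta5^3) * zeta5_cyc
  · linear_combination (zeta5^4 - zeta5^3) * zeta5_cyc
  · linear_combination (-zeta5^2 + zeta5^4 - zeta5^7 + zeta5^8) * zeta5_cyc

/-- The matrix `β = [[0,0,1,−1],[0,0,−1,0],[0,1,0,0],[1,1,0,0]]` is symplectic and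
sends `Z₀` to `−conj(Z₀)`. -/
theorem beta_symplectic_and_sends_Zcm :
    IsSymplectic (Matrix.fromBlocks (0 : Matrix (Fin 2) (Fin 2) ℤ) !![1, -1; -1, 0]
      !![0, 1; 1, 1] (0 : Matrix (Fin 2) (Fin 2) ℤ)) ∧
    -(Zcm.map (starRingEnd ℂ))
      = (czM (0 : Matrix (Fin 2) (Fin 2) ℤ) * Zcm + czM !![1, -1; -1, 0]) *
        (czM !![0, 1; 1, 1] * Zcm + czM (0 : Matrix (Fin 2) (Fin 2) ℤ))⁻¹ := by
  constructor
  · show _ = _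
    ext i j
    rcases i with i | i <;> rcases j with j | j <;> fin_cases i <;> fin_cases j <;>
      simp [Jmat, Matrix.mul_apply, Fintype.sum_sum_type, Fin.sum_univ_two,
        Matrix.fromBlocks, Matrix.transpose_apply]
  · have hY : IsUnit (czM !![0, 1; 1, 1] * Zcm + czM (0 : Matrix (Fin 2) (Fin 2) ℤ)).det := by
      rw [isUnit_iff_ne_zero]
      have hd : (czM !![0, 1; 1, 1] * Zcm + czM (0 : Matrix (Fin 2) (Fin 2) ℤ)).det
          = -zeta5 ^ 3 := by
        rw [hZ]
        simp [czM, Matrix.det_fin_two, Matrix.mul_apply, Fin.sum_univ_two, Matrix.map_apply]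
        linear_combination (1 - zeta5 + zeta5 ^ 2) * zeta5_cyc
      rw [hd]
      exact neg_ne_zero.mpr (pow_ne_zero _ zeta5_ne_zero)
    have key : -(Zcm.map (starRingEnd ℂ)) *
        (czM !![0, 1; 1, 1] * Zcm + czM (0 : Matrix (Fin 2) (Fin 2) ℤ))
        = czM (0 : Matrix (Fin 2) (Fin 2) ℤ) * Zcm + czM !![1, -1; -1, 0] := by
      rw [hZconj, hZ]
      ext i j
      fin_cases i <;> fin_cases j <;>
        simp [czM, Matrix.mul_apply, Fin.sum_univ_two, Matrix.map_apply]
      · linear_combination (-2 + 2*zeta5 - zeta5^2) * zeta5_cyc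
      · linear_combination zeta5_cyc
      · linear_combination (1 - zeta5 + zeta5^3) * zeta5_cyc
      · linear_combination (1 - zeta5 + zeta5^2 - zeta5^3) * zeta5_cyc
    rw [← key, Matrix.mul_nonsing_inv_cancel_right _ _ hY]
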